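/- The Totaro cycle C_a, the image in (P¹ \ {1})³ of the map t ↦ (t, 1-t, 1-a/t) from P¹, intersected with the faces z_i ∈ {0, ∞}, satisfies: its algebraic boundary is ∂C_a = [a, 1-a], coming only from the face z_3 = 0; all other faces give empty or degenerate intersections, provided a ∉ {0, 1}. -/

import Mathlib

/-- A point of `P¹(F)`, modeled as `Option F` with `none` the point `∞`. -/
abbrev P1 (F : Type) := Option F

/-- A point of `(P¹)³` lies in the algebraic cube `□³ = (P¹ \ {1})³` iff none of its
coordinates equals `1`. -/
def inCube3 {F : Type} [Field F] (p : P1 F × P1 F × P1 F) : Prop :=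
  p.1 ≠ some 1 ∧ p.2.1 ≠ some 1 ∧ p.2.2 ≠ some 1

/-- The Totaro parametrization `t ↦ (t, 1 - t, 1 - a/t)` of `P¹`, with the values at
`t = ∞` and `t = 0` given by the evident limits `(∞, ∞, 1)` and `(0, 1, ∞)`. -/
def totaro {F : Type} [Field F] [DecidableEq F] (a : F) : P1 F → P1 F × P1 F × P1 F
  | none => (none, none, some 1)
  | some t => if t = 0 then (some 0, some 1, none)
      else (some t, some (1 - t), some (1 - a / t))

/-- For `a ∉ {0, 1}`, the Totaro cycle `C_a` (the image of
`t ↦ (t, 1-t, 1-a/t)` intersected with the cube) has algebraic boundary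
`∂C_a = [a, 1-a]`, coming only from the face `z₃ = 0`: the intersection of the curve
with `{z₃ = 0}` inside the cube is precisely the point with `(z₁, z₂) = (a, 1-a)`
(attained at `t = a`), and the intersections with the faces `z₁ = 0`, `z₂ = 0`,
`z₁ = ∞`, `z₂ = ∞`, `z₃ = ∞` inside the cube are all empty (each is empty or has a
coordinate equal to `1`). -/
theorem totaro_cycle_boundary (F : Type) [Field F] [DecidableEq F]
    (a : F) (ha0 : a ≠ 0) (ha1 : a ≠ 1) :
    (∀ t : P1 F, ((totaro a t).2.2 = some 0 ∧ inCube3 (totaro a t)) ↔ t = some a) ∧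
    (totaro a (some a)).1 = some a ∧ (totaro a (some a)).2.1 = some (1 - a) ∧
    (∀ t : P1 F, ¬ ((totaro a t).1 = some 0 ∧ inCube3 (totaro a t))) ∧
    (∀ t : P1 F, ¬ ((totaro a t).2.1 = some 0 ∧ inCube3 (totaro a t))) ∧
    (∀ t : P1 F, ¬ ((totaro a t).1 = none ∧ inCube3 (totaro a t))) ∧
    (∀ t : P1 F, ¬ ((totaro a t).2.1 = none ∧ inCube3 (totaro a t))) ∧
    (∀ t : P1 F, ¬ ((totaro a t).2.2 = none ∧ inCube3 (totaro a t))) := by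
  refine ⟨?_, by simp [totaro, ha0], by simp [totaro, ha0], ?_, ?_, ?_, ?_, ?_⟩
  · intro t
    cases t with
    | none => simp [totaro, inCube3]
    | some t =>
      by_cases ht : t = 0
      · simp [totaro, ht, inCube3, ha0.symm]
      · simp [totaro, ht, inCube3]
        constructor
        · rintro ⟨h3, -, -⟩
          have h : a / t = 1 := (sub_eq_zero.mp h3).symm
          field_simp at h
          exact h.symm
        · rintro rfl
          exact ⟨by field_simp; exact sub_self 1, ha1, ha0⟩
  all_goals
    intro t
    cases t with
    | none => simp [totaro, inCube3]
    | some t =>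
      by_cases ht : t = 0 <;>
        simp [totaro, ht, inCube3, sub_eq_zero] <;> tauto
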